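/- Let Γ' be a chordal graph on vertex set {2,…,n} such that 2,3,…,n is a perfect elimination order of Γ', and suppose that for every k ≥ 0 the k-th homological shift ideal HS_k(I((Γ')^c)) ⊆ K[x_2,…,x_n] has linear quotients. Fix i ∈ {2,…,n} and let Γ be the whisker graph on [n] with edge set E(Γ) = E(Γ') ∪ {{1,i}}, and set G = Γ^c. Then 1,2,…,n is a perfect elimination order of Γ = G^c, and for every k ≥ 0 the ideal HS_k(I(G)) ⊆ K[x_1,…,x_n] has linear quotients. -/

import Mathlib

open MvPolynomial

/-- An ideal of `K[x_1,…,x_n]` is *generated by variables* if it is the span of the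
image of a subset of the variables. -/
def genByVars {K : Type*} [Field K] {n : ℕ} (I : Ideal (MvPolynomial (Fin n) K)) : Prop :=
  ∃ T : Set (Fin n), I = Ideal.span (MvPolynomial.X '' T)
/-- A polynomial is a monomial (with coefficient `1`). -/
def IsMonomialElt {K : Type*} [Field K] {n : ℕ} (p : MvPolynomial (Fin n) K) : Prop :=
  ∃ a : Fin n →₀ ℕ, p = MvPolynomial.monomial a 1
/-- A monomial ideal has *linear quotients* if its minimal monomial generators admit an
ordering `u 0, u 1, …` such that each colon ideal `(u_0,…,u_{i-1}) : u_i` is generated by a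
subset of the variables.  (The conditions that the `u i` are monomials, pairwise
non-dividing, and generate `I` say exactly that they are the minimal monomial generators
of `I`.) -/
def HasLinearQuotients {K : Type*} [Field K] {n : ℕ}
    (I : Ideal (MvPolynomial (Fin n) K)) : Prop :=
  ∃ (m : ℕ) (u : Fin m → MvPolynomial (Fin n) K),
    (∀ i, IsMonomialElt (u i)) ∧
    (∀ i j, i ≠ j → ¬ u i ∣ u j) ∧
    Ideal.span (Set.range u) = I ∧
    ∀ i : Fin m,
      genByVars ((Ideal.span (u '' {j | j < i})).colon (Ideal.span {u i}))
/-- The natural ordering `1, 2, …, n` of the vertices is a perfect elimination order of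
`H`: for each vertex, its neighbourhood among the later vertices is a clique. -/
def natPEO {n : ℕ} (H : SimpleGraph (Fin n)) : Prop :=
  ∀ i j k : Fin n, i < j → i < k → j ≠ k → H.Adj i j → H.Adj i k → H.Adj j k

/-- The reversed ordering `n, n-1, …, 1` of the vertices is a perfect elimination order of
`H`: for each vertex, its neighbourhood among the earlier-labelled vertices is a clique. -/
def revPEO {n : ℕ} (H : SimpleGraph (Fin n)) : Prop :=
  ∀ i j k : Fin n, j < i → k < i → j ≠ k → H.Adj i j → H.Adj i k → H.Adj j k
/-- The generating monomials of the `k`-th homological shift ideal `HS_k(I(G))`: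
all monomials `x_A x_B` with `A, B` nonempty, `max A < min B`, `|A ∪ B| = k + 2` and
`{max A, b} ∈ E(G)` for all `b ∈ B`. -/
def HSgens (K : Type*) [Field K] {n : ℕ} (G : SimpleGraph (Fin n)) (k : ℕ) :
    Set (MvPolynomial (Fin n) K) :=
  {w | ∃ A B : Finset (Fin n), A.Nonempty ∧ B.Nonempty ∧
    (∀ a ∈ A, ∀ b ∈ B, a < b) ∧ (A ∪ B).card = k + 2 ∧
    (∃ a0 ∈ A, (∀ a ∈ A, a ≤ a0) ∧ ∀ b ∈ B, G.Adj a0 b) ∧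
    w = (∏ i ∈ A, MvPolynomial.X i) * ∏ i ∈ B, MvPolynomial.X i}
/-- A graph is *chordal* if it has no induced cycle of length greater than three,
i.e. every cycle of length at least four has a chord. -/
def IsChordal {V : Type*} (G : SimpleGraph V) : Prop :=
  ∀ m : ℕ, 4 ≤ m → ∀ f : ZMod m → V, Function.Injective f →
    (∀ i, G.Adj (f i) (f (i + 1))) →
      ∃ i j : ZMod m, G.Adj (f i) (f j) ∧ i ≠ j ∧ i + 1 ≠ j ∧ j + 1 ≠ i
/-- The whisker graph of `Γ'` (a graph on the vertices `1,…,n`, encoded as `Fin n` and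
embedded via `Fin.succ` into the later `n` vertices of `Fin (n+1)`), obtained by adding
the new vertex `0` together with the single whisker edge `{0, i.succ}`. -/
def whiskerGraph {n : ℕ} (Γ' : SimpleGraph (Fin n)) (i : Fin n) :
    SimpleGraph (Fin (n + 1)) where
  Adj u v := (∃ a b : Fin n, Γ'.Adj a b ∧ u = a.succ ∧ v = b.succ) ∨
    (u = 0 ∧ v = i.succ) ∨ (u = i.succ ∧ v = 0)
  symm := by
    constructor
    intro u v h
    rcases h with ⟨a, b, hab, hu, hv⟩ | ⟨hu, hv⟩ | ⟨hu, hv⟩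
    · exact Or.inl ⟨b, a, hab.symm, hv, hu⟩
    · exact Or.inr (Or.inr ⟨hv, hu⟩)
    · exact Or.inr (Or.inl ⟨hv, hu⟩)
  loopless := by
    constructor
    intro u h
    rcases h with ⟨a, b, hab, hu, hv⟩ | ⟨hu, hv⟩ | ⟨hu, hv⟩
    · exact hab.ne (Fin.succ_injective _ (hu.symm.trans hv))
    · exact (Fin.succ_ne_zero i) (hv.symm.trans hu)
    · exact (Fin.succ_ne_zero i) (hu.symm.trans hv)

/-- combinatorial linear-quotients order, phrased with a rank function -/
def RankLQ' {N : ℕ} (𝒮 : Set (Finset (Fin N))) : Prop :=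
  ∃ r : Finset (Fin N) → ℕ, Set.InjOn r 𝒮 ∧
    ∀ S ∈ 𝒮, ∀ T ∈ 𝒮, r T < r S →
      ∃ v ∈ T \ S, ∃ L ∈ 𝒮, r L < r S ∧ L \ S = {v}

noncomputable def ind {N : ℕ} (S : Finset (Fin N)) : Fin N →₀ ℕ :=
  ∑ v ∈ S, Finsupp.single v 1

lemma ind_apply {N : ℕ} (S : Finset (Fin N)) (w : Fin N) :
    ind S w = if w ∈ S then 1 else 0 := by
  classical
  rw [ind, Finsupp.finset_sum_apply]
  simp [Finsupp.single_apply]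

lemma ind_le_iff {N : ℕ} {S T : Finset (Fin N)} : ind S ≤ ind T ↔ S ⊆ T := by
  constructor
  · intro h x hx
    have := h x
    rw [ind_apply, ind_apply, if_pos hx] at this
    by_contra hxT
    rw [if_neg hxT] at this; omega
  · intro h x
    rw [ind_apply, ind_apply]
    by_cases hx : x ∈ S
    · rw [if_pos hx, if_pos (h hx)]
    · simp [hx]

lemma ind_inj {N : ℕ} {S T : Finset (Fin N)} (h : ind S = ind T) : S = T := by
  apply Finset.Subset.antisymm <;> rw [← ind_le_iff, h]

lemma ind_insert {N : ℕ} {a : Fin N} {S : Finset (Fin N)} (h : a ∉ S) :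
    ind (insert a S) = Finsupp.single a 1 + ind S := by
  rw [ind, ind, Finset.sum_insert h]

lemma prodX_eq {K : Type*} [Field K] {N : ℕ} (S : Finset (Fin N)) :
    (∏ v ∈ S, X v : MvPolynomial (Fin N) K) = monomial (ind S) 1 := by
  classical
  induction S using Finset.induction_on with
  | empty => simp [ind]
  | insert a s h ih =>
    rw [Finset.prod_insert h, ih, ind_insert h, X, monomial_mul, one_mul]

lemma ind_sdiff_add_le {N : ℕ} (T S : Finset (Fin N)) : ind T ≤ ind (T \ S) + ind S := by
  intro w
  simp only [Finsupp.add_apply, ind_apply, Finset.mem_sdiff]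
  by_cases hT : w ∈ T
  · by_cases hS : w ∈ S <;> simp [hT, hS]
  · simp [hT]

lemma ind_le_single_add {N : ℕ} {L S : Finset (Fin N)} {v : Fin N} :
    ind L ≤ Finsupp.single v 1 + ind S ↔ L ⊆ insert v S := by
  constructor
  · intro h w hw
    have := h w
    rw [Finsupp.add_apply, ind_apply, ind_apply, if_pos hw, Finsupp.single_apply] at this
    rw [Finset.mem_insert]
    by_contra hc
    push_neg at hc
    rw [if_neg (fun hh => hc.1 hh.symm), if_neg hc.2] at this; omega
  · intro h w
    rw [Finsupp.add_apply, ind_apply, ind_apply, Finsupp.single_apply]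
    by_cases hw : w ∈ L
    · rw [if_pos hw]
      rcases Finset.mem_insert.mp (h hw) with rfl | hws
      · simp
      · rw [if_pos hws]
        omega
    · rw [if_neg hw]
      omega

section Transfer
variable {K : Type*} [Field K] {N : ℕ}

lemma range_u_eq {m : ℕ} (u : Fin m → MvPolynomial (Fin N) K) (a : Fin m → (Fin N →₀ ℕ))
    (hu : ∀ j, u j = monomial (a j) 1) (A : Set (Fin m)) :
    u '' A = (fun e => monomial e (1:K)) '' (a '' A) := by
  rw [Set.image_image]
  exact Set.image_congr fun j _ => hu j

/-- Construction: a combinatorial LQ order gives linear quotients. -/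
theorem hlq_of_rankLQ {d : ℕ} {𝒮 : Set (Finset (Fin N))}
    (hcard : ∀ S ∈ 𝒮, S.card = d) (h : RankLQ' 𝒮) :
    HasLinearQuotients (Ideal.span ((fun S => ∏ v ∈ S, X v) '' 𝒮 :
      Set (MvPolynomial (Fin N) K))) := by
  classical
  obtain ⟨r, hinj, hlq⟩ := h
  set F : Finset (Finset (Fin N)) := (Set.toFinite 𝒮).toFinset with hF
  set R : Finset ℕ := F.image r with hR
  set m := R.card with hm
  set e := R.orderIsoOfFin rfl with he
  have hex : ∀ j : Fin m, ∃ S, S ∈ F ∧ r S = (e j : ℕ) := by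
    intro j
    have : (e j : ℕ) ∈ R := (e j).2
    rcases Finset.mem_image.mp this with ⟨S, hS, hrS⟩
    exact ⟨S, hS, hrS⟩
  set f : Fin m → Finset (Fin N) := fun j => (hex j).choose with hf
  have hfF : ∀ j, f j ∈ 𝒮 := fun j => (Set.Finite.mem_toFinset _).mp (hex j).choose_spec.1
  have hrf : ∀ j, r (f j) = (e j : ℕ) := fun j => (hex j).choose_spec.2
  have hmono : ∀ {j j' : Fin m}, j < j' → r (f j) < r (f j') := by
    intro j j' hjj
    rw [hrf, hrf]
    exact_mod_cast (e.lt_iff_lt).mpr hjj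
  have hlt_of_r : ∀ {j j' : Fin m}, r (f j) < r (f j') → j < j' := by
    intro j j' hr
    by_contra hc
    push_neg at hc
    rcases lt_or_eq_of_le hc with hlt | heq
    · exact absurd (hmono hlt) (by omega)
    · rw [heq] at hr; omega
  have hfinj : ∀ {j j' : Fin m}, f j = f j' → j = j' := by
    intro j j' hh
    have := hrf j; rw [hh, hrf j'] at this
    exact (e.injective (Subtype.ext this)).symm
  have hsurj : ∀ S ∈ 𝒮, ∃ j, f j = S := by
    intro S hS
    have hSR : r S ∈ R := Finset.mem_image_of_mem r ((Set.Finite.mem_toFinset _).mpr hS)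
    refine ⟨e.symm ⟨r S, hSR⟩, ?_⟩
    apply hinj (hfF _) hS
    rw [hrf]
    simp
  refine ⟨m, fun j => monomial (ind (f j)) 1, fun j => ⟨_, rfl⟩, ?_, ?_, ?_⟩
  · intro j j' hne hdvd
    rw [monomial_dvd_monomial] at hdvd
    rcases hdvd.1 with h1 | hle
    · exact one_ne_zero h1
    · have : f j = f j' :=
        Finset.eq_of_subset_of_card_le (ind_le_iff.mp hle)
          (by rw [hcard _ (hfF j), hcard _ (hfF j')])
      exact hne (hfinj this)
  · apply le_antisymm
    · rw [Ideal.span_le]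
      rintro _ ⟨j, rfl⟩
      apply Ideal.subset_span
      exact ⟨f j, hfF j, prodX_eq (f j)⟩
    · rw [Ideal.span_le]
      rintro _ ⟨S, hS, rfl⟩
      apply Ideal.subset_span
      rcases hsurj S hS with ⟨j, rfl⟩
      exact ⟨j, (prodX_eq (f j)).symm⟩
  · intro j
    refine ⟨{v | ∃ l : Fin m, l < j ∧ f l \ f j = {v}}, ?_⟩
    have hspan_eq : ((fun j => monomial (ind (f j)) (1:K)) '' {l | l < j}) =
        (fun e => monomial e (1:K)) '' ((fun l => ind (f l)) '' {l | l < j}) := by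
      rw [Set.image_image]
    apply le_antisymm
    · intro p hp
      rw [Ideal.mem_colon_span_singleton] at hp
      rw [mem_ideal_span_X_image]
      intro b hb
      have hins : b + ind (f j) ∈ (p * monomial (ind (f j)) (1:K)).support := by
        rw [mem_support_iff, coeff_mul_monomial, mul_one]
        exact mem_support_iff.mp hb
      rw [hspan_eq] at hp
      have := (mem_ideal_span_monomial_image).mp hp _ hins
      rcases this with ⟨si, hsi, hle⟩
      rcases hsi with ⟨l, hl, rfl⟩
      have hlS : l < j := hl
      obtain ⟨v, hv, L, hL, hrL, hLd⟩ :=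
        hlq (f j) (hfF j) (f l) (hfF l) (hmono hlS)
      refine ⟨v, ?_, ?_⟩
      · rcases hsurj L hL with ⟨l', rfl⟩
        exact ⟨l', hlt_of_r (by rw [hrf j] at hrL ⊢; exact hrL), hLd⟩
      · -- b v ≠ 0 since v ∈ f l \ f j
        have h1 : ind (f l) v = 1 := by
          rw [ind_apply, if_pos (Finset.mem_sdiff.mp hv).1]
        have h2 : ind (f j) v = 0 := by
          rw [ind_apply, if_neg (Finset.mem_sdiff.mp hv).2]
        have := hle v
        rw [h1, Finsupp.add_apply, h2] at this
        omega
    · rw [Ideal.span_le]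
      rintro _ ⟨v, ⟨l, hl, hld⟩, rfl⟩
      rw [SetLike.mem_coe, Ideal.mem_colon_span_singleton, X, monomial_mul, one_mul]
      rw [hspan_eq]
      rw [mem_ideal_span_monomial_image]
      intro b hb
      rw [support_monomial, if_neg (one_ne_zero : (1:K) ≠ 0)] at hb
      rw [Finset.mem_singleton] at hb
      subst hb
      refine ⟨ind (f l), ⟨l, hl, rfl⟩, ?_⟩
      rw [ind_le_single_add]
      intro w hw
      by_cases hwj : w ∈ f j
      · exact Finset.mem_insert_of_mem hwj
      · have : w ∈ f l \ f j := Finset.mem_sdiff.mpr ⟨hw, hwj⟩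
        rw [hld, Finset.mem_singleton] at this
        exact Finset.mem_insert.mpr (Or.inl this)

/-- Extraction: linear quotients gives a combinatorial LQ order. -/
theorem rankLQ_of_hlq {d : ℕ} {𝒮 : Set (Finset (Fin N))}
    (hcard : ∀ S ∈ 𝒮, S.card = d)
    (h : HasLinearQuotients (Ideal.span ((fun S => ∏ v ∈ S, X v) '' 𝒮 :
      Set (MvPolynomial (Fin N) K)))) : RankLQ' 𝒮 := by
  classical
  obtain ⟨m, u, hmon, hndvd, hspan, hcolon⟩ := h
  choose a ha using hmon
  have himg : Ideal.span ((fun S => ∏ v ∈ S, X v) '' 𝒮 : Set (MvPolynomial (Fin N) K))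
      = Ideal.span ((fun e => monomial e (1:K)) '' (ind '' 𝒮)) := by
    rw [Set.image_image]
    congr 1
    exact Set.image_congr fun S _ => prodX_eq S
  have hspan' : Ideal.span ((fun e => monomial e (1:K)) '' (a '' Set.univ))
      = Ideal.span ((fun e => monomial e (1:K)) '' (ind '' 𝒮)) := by
    rw [← range_u_eq u a ha, Set.image_univ, hspan, himg]
  have hmem1 : ∀ S ∈ 𝒮, ∃ j : Fin m, a j ≤ ind S := by
    intro S hS
    have : (monomial (ind S) (1:K)) ∈ Ideal.span ((fun e => monomial e (1:K)) '' (ind '' 𝒮)) :=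
      Ideal.subset_span ⟨ind S, ⟨S, hS, rfl⟩, rfl⟩
    rw [← hspan', mem_ideal_span_monomial_image] at this
    have hsup : ind S ∈ (monomial (ind S) (1:K)).support := by
      rw [support_monomial, if_neg (one_ne_zero : (1:K) ≠ 0)]; exact Finset.mem_singleton_self _
    rcases this _ hsup with ⟨si, ⟨jj, _, rfl⟩, hle⟩
    exact ⟨jj, hle⟩
  have hmem2 : ∀ j : Fin m, ∃ S ∈ 𝒮, ind S ≤ a j := by
    intro j
    have : (monomial (a j) (1:K)) ∈ Ideal.span ((fun e => monomial e (1:K)) '' (ind '' 𝒮)) := by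
      rw [← hspan']
      exact Ideal.subset_span ⟨a j, ⟨j, trivial, rfl⟩, rfl⟩
    rw [mem_ideal_span_monomial_image] at this
    have hsup : a j ∈ (monomial (a j) (1:K)).support := by
      rw [support_monomial, if_neg (one_ne_zero : (1:K) ≠ 0)]; exact Finset.mem_singleton_self _
    rcases this _ hsup with ⟨si, ⟨S, hS, rfl⟩, hle⟩
    exact ⟨S, hS, hle⟩
  have hstep1 : ∀ S ∈ 𝒮, ∃ j : Fin m, a j = ind S := by
    intro S hS
    rcases hmem1 S hS with ⟨j, hle⟩
    rcases hmem2 j with ⟨S₂, hS₂, hle₂⟩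
    have hsub : S₂ ⊆ S := ind_le_iff.mp (hle₂.trans hle)
    have : S₂ = S := Finset.eq_of_subset_of_card_le hsub
      (by rw [hcard _ hS, hcard _ hS₂])
    subst this
    exact ⟨j, le_antisymm hle hle₂⟩
  have huinj : ∀ {j j' : Fin m}, a j = a j' → j = j' := by
    intro j j' hh
    by_contra hne
    exact hndvd j j' hne (by rw [ha, ha, hh])
  have hstep2 : ∀ j : Fin m, ∃ S ∈ 𝒮, a j = ind S := by
    intro j
    rcases hmem2 j with ⟨S, hS, hle⟩
    rcases hstep1 S hS with ⟨j', hj'⟩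
    have hdvd : u j' ∣ u j := by
      rw [ha, ha, ]
      exact monomial_dvd_monomial.mpr ⟨Or.inr (hj' ▸ hle), dvd_refl _⟩
    have : j' = j := by
      by_contra hne
      exact hndvd j' j hne hdvd
    subst this
    exact ⟨S, hS, hj'⟩
  have hidx : ∀ S : Finset (Fin N), S ∈ 𝒮 → {j : Fin m // a j = ind S} := by
    intro S hS
    exact ⟨(hstep1 S hS).choose, (hstep1 S hS).choose_spec⟩
  refine ⟨fun S => if hS : S ∈ 𝒮 then ((hidx S hS : {j // a j = ind S}) : Fin m).val else 0,
    ?_, ?_⟩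
  · intro S hS T hT hrank
    simp only [dif_pos hS, dif_pos hT] at hrank
    have : ((hidx S hS) : Fin m) = ((hidx T hT) : Fin m) := Fin.val_injective hrank
    have h2 : ind S = ind T := by
      rw [← (hidx S hS).2, this, (hidx T hT).2]
    exact ind_inj h2
  · intro S hS T hT hrank
    simp only [dif_pos hS, dif_pos hT] at hrank
    set jS := ((hidx S hS) : Fin m) with hjS
    set jT := ((hidx T hT) : Fin m) with hjT
    have hjlt : jT < jS := hrank
    obtain ⟨T0, hT0⟩ := hcolon jS
    have hspan_eq : (u '' {l | l < jS}) =
        (fun e => monomial e (1:K)) '' (a '' {l | l < jS}) := range_u_eq u a ha _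
    -- x_{T\S} is in the colon ideal
    have hTmS : (monomial (ind (T \ S)) (1:K)) ∈
        (Ideal.span (u '' {l | l < jS})).colon (Ideal.span {u jS}) := by
      rw [Ideal.mem_colon_span_singleton, ha, (hidx S hS).2, monomial_mul, mul_one]
      rw [hspan_eq, mem_ideal_span_monomial_image]
      intro b hb
      rw [support_monomial, if_neg (one_ne_zero : (1:K) ≠ 0), Finset.mem_singleton] at hb
      subst hb
      refine ⟨a jT, ⟨jT, hjlt, rfl⟩, ?_⟩
      rw [(hidx T hT).2]
      exact ind_sdiff_add_le T S
    rw [hT0, mem_ideal_span_X_image] at hTmS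
    have hsup : ind (T \ S) ∈ (monomial (ind (T\S)) (1:K)).support := by
      rw [support_monomial, if_neg (one_ne_zero : (1:K) ≠ 0)]; exact Finset.mem_singleton_self _
    rcases hTmS _ hsup with ⟨v, hvT0, hvne⟩
    have hvTS : v ∈ T \ S := by
      rw [ind_apply] at hvne
      by_contra hc
      rw [if_neg hc] at hvne; exact hvne rfl
    -- X v is in the colon ideal
    have hXv : (X v : MvPolynomial (Fin N) K) ∈
        (Ideal.span (u '' {l | l < jS})).colon (Ideal.span {u jS}) := by
      rw [hT0]
      exact Ideal.subset_span ⟨v, hvT0, rfl⟩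
    rw [Ideal.mem_colon_span_singleton, ha, (hidx S hS).2, X, monomial_mul, one_mul] at hXv
    rw [hspan_eq, mem_ideal_span_monomial_image] at hXv
    have hsup2 : Finsupp.single v 1 + ind S ∈
        (monomial (Finsupp.single v 1 + ind S) (1:K)).support := by
      rw [support_monomial, if_neg (one_ne_zero : (1:K) ≠ 0)]; exact Finset.mem_singleton_self _
    rcases hXv _ hsup2 with ⟨si, ⟨l, hl, rfl⟩, hle⟩
    obtain ⟨L, hL, haL⟩ := hstep2 l
    have hLsub : L ⊆ insert v S := ind_le_single_add.mp (haL ▸ hle)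
    have hLne : L ≠ S := by
      intro hc
      subst hc
      have : l = jS := huinj (by rw [haL, (hidx L hS).2])
      subst this
      simp only [Set.mem_setOf_eq] at hl
      exact absurd hl (lt_irrefl _)
    have hvnotS : v ∉ S := (Finset.mem_sdiff.mp hvTS).2
    have hLS : L \ S = {v} := by
      apply Finset.Subset.antisymm
      · intro w hw
        rcases Finset.mem_sdiff.mp hw with ⟨hwL, hwS⟩
        rcases Finset.mem_insert.mp (hLsub hwL) with rfl | hws
        · exact Finset.mem_singleton_self _
        · exact absurd hws hwS
      · intro w hw
        rw [Finset.mem_singleton] at hw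
        subst hw
        rw [Finset.mem_sdiff]
        refine ⟨?_, hvnotS⟩
        by_contra hc
        have hsub : L ⊆ S := fun x hx => by
          rcases Finset.mem_insert.mp (hLsub hx) with rfl | h
          · exact absurd hx hc
          · exact h
        exact hLne (Finset.eq_of_subset_of_card_le hsub (by rw [hcard _ hS, hcard _ hL]))
    refine ⟨v, hvTS, L, hL, ?_, hLS⟩
    simp only [dif_pos hL, dif_pos hS]
    have : ((hidx L hL) : Fin m) = l := huinj (by rw [(hidx L hL).2, haL])
    rw [this]
    exact hl
end Transfer

section Comb
variable {n : ℕ}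

/-- the family of supports of the generators of `HS_k(I(H))`, `d = k+2` -/
def Fam {N : ℕ} (H : SimpleGraph (Fin N)) (d : ℕ) : Set (Finset (Fin N)) :=
  {S | S.card = d ∧ ∃ t ∈ S, (∃ s ∈ S, t < s) ∧ ∀ s ∈ S, t < s → H.Adj t s}

lemma fam_card {N d : ℕ} {H : SimpleGraph (Fin N)} : ∀ S ∈ Fam H d, S.card = d :=
  fun _ h => h.1

lemma fam_one_empty {N : ℕ} (H : SimpleGraph (Fin N)) : Fam H 1 = ∅ := by
  ext S
  simp only [Fam, Set.mem_setOf_eq, Set.mem_empty_iff_false, iff_false, not_and]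
  rintro hcard ⟨t, htS, ⟨s, hsS, hts⟩, -⟩
  rcases Finset.card_eq_one.mp hcard with ⟨x, rfl⟩
  rw [Finset.mem_singleton] at htS hsS
  subst htS; subst hsS
  exact lt_irrefl _ hts

lemma rankLQ_empty {N : ℕ} : RankLQ' (∅ : Set (Finset (Fin N))) :=
  ⟨fun _ => 0, fun S hS => absurd hS (Set.notMem_empty S), fun S hS => absurd hS (Set.notMem_empty S)⟩

lemma sum_range_two_pow (M : ℕ) : ∑ i ∈ Finset.range M, 2^i = 2^M - 1 := by
  induction M with
  | zero => rfl
  | succ M ih =>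
    rw [Finset.sum_range_succ, ih]
    have : 1 ≤ 2^M := Nat.one_le_two_pow
    omega

lemma sum_two_pow_lt (A : Finset (Fin n)) (c : ℕ)
    (h : ∀ v ∈ A, n - 1 - v.val < c) : ∑ v ∈ A, 2^(n - 1 - v.val) < 2^c := by
  have hinj : ∀ x ∈ A, ∀ y ∈ A, n - 1 - x.val = n - 1 - y.val → x = y := by
    intro x _ y _ hxy
    have hx' := x.isLt; have hy' := y.isLt
    exact Fin.ext (by omega)
  calc ∑ v ∈ A, 2^(n - 1 - v.val)
      = ∑ e ∈ A.image (fun v => n - 1 - v.val), 2^e := (Finset.sum_image hinj).symm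
    _ ≤ ∑ e ∈ Finset.range c, 2^e := Finset.sum_le_sum_of_subset (by
        intro e he
        rcases Finset.mem_image.mp he with ⟨v, hv, rfl⟩
        exact Finset.mem_range.mpr (h v hv))
    _ = 2^c - 1 := sum_range_two_pow c
    _ < 2^c := by have : 1 ≤ 2^c := Nat.one_le_two_pow; omega

/-- lexicographic rank: smaller sets (containing smaller elements) get smaller rank -/
def rank1 (S : Finset (Fin n)) : ℕ := ∑ v ∈ Sᶜ, 2^(n - 1 - v.val)

lemma rank1_lt (S : Finset (Fin n)) : rank1 S < 2^n :=
  sum_two_pow_lt _ n (fun v _ => by have := v.isLt; omega)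

lemma rank1_lt_of_lex {S T : Finset (Fin n)} {d : Fin n} (hdS : d ∈ S) (hdT : d ∉ T)
    (hagree : ∀ w : Fin n, w < d → (w ∈ S ↔ w ∈ T)) : rank1 S < rank1 T := by
  classical
  have hlow : Sᶜ.filter (fun v => v.val < d.val) = Tᶜ.filter (fun v => v.val < d.val) := by
    ext w
    simp only [Finset.mem_filter, Finset.mem_compl]
    constructor
    · rintro ⟨hw, hwd⟩
      exact ⟨fun hc => hw ((hagree w hwd).mpr hc), hwd⟩
    · rintro ⟨hw, hwd⟩
      exact ⟨fun hc => hw ((hagree w hwd).mp hc), hwd⟩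
  have hsplitS := Finset.sum_filter_add_sum_filter_not Sᶜ (fun v => v.val < d.val)
    (fun v => 2^(n - 1 - v.val))
  have hsplitT := Finset.sum_filter_add_sum_filter_not Tᶜ (fun v => v.val < d.val)
    (fun v => 2^(n - 1 - v.val))
  have hhighS : ∑ v ∈ Sᶜ.filter (fun v => ¬ v.val < d.val), 2^(n - 1 - v.val)
      < 2^(n - 1 - d.val) := by
    apply sum_two_pow_lt
    intro v hv
    rcases Finset.mem_filter.mp hv with ⟨hvc, hvd⟩
    have hvS : v ∉ S := Finset.mem_compl.mp hvc
    have hvne : v ≠ d := fun h => hvS (h ▸ hdS)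
    have : d.val < v.val := by
      rcases lt_trichotomy d.val v.val with h | h | h
      · exact h
      · exact absurd (Fin.ext h.symm) hvne
      · omega
    have := v.isLt
    omega
  have hhighT : 2^(n - 1 - d.val) ≤ ∑ v ∈ Tᶜ.filter (fun v => ¬ v.val < d.val), 2^(n - 1 - v.val) := by
    apply Finset.single_le_sum (f := fun v : Fin n => 2^(n - 1 - v.val))
    · intro w _; positivity
    · exact Finset.mem_filter.mpr ⟨Finset.mem_compl.mpr hdT, lt_irrefl _⟩
  rw [hlow] at hsplitS
  unfold rank1
  omega

lemma exists_min_diff {S T : Finset (Fin n)} (h : S ≠ T) :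
    ∃ d, (d ∈ S ∧ d ∉ T ∨ d ∈ T ∧ d ∉ S) ∧ ∀ w, w < d → (w ∈ S ↔ w ∈ T) := by
  classical
  have hne : ((S \ T) ∪ (T \ S)).Nonempty := by
    rw [Finset.nonempty_iff_ne_empty]
    intro hc
    apply h
    have h1 : S \ T = ∅ := Finset.union_eq_empty.mp hc |>.1
    have h2 : T \ S = ∅ := Finset.union_eq_empty.mp hc |>.2
    exact Finset.Subset.antisymm (Finset.sdiff_eq_empty_iff_subset.mp h1)
      (Finset.sdiff_eq_empty_iff_subset.mp h2)
  set d := ((S \ T) ∪ (T \ S)).min' hne with hd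
  have hdmem := ((S \ T) ∪ (T \ S)).min'_mem hne
  refine ⟨d, ?_, ?_⟩
  · rcases Finset.mem_union.mp hdmem with hh | hh
    · exact Or.inl ⟨(Finset.mem_sdiff.mp hh).1, (Finset.mem_sdiff.mp hh).2⟩
    · exact Or.inr ⟨(Finset.mem_sdiff.mp hh).1, (Finset.mem_sdiff.mp hh).2⟩
  · intro w hw
    by_contra hc
    have hwmem : w ∈ (S \ T) ∪ (T \ S) := by
      rw [Finset.mem_union, Finset.mem_sdiff, Finset.mem_sdiff]
      by_cases hwS : w ∈ S
      · exact Or.inl ⟨hwS, fun hwT => hc ⟨fun _ => hwT, fun _ => hwS⟩⟩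
      · by_cases hwT : w ∈ T
        · exact Or.inr ⟨hwT, hwS⟩
        · exact absurd ⟨fun h' => absurd h' hwS, fun h' => absurd h' hwT⟩ hc
    exact absurd (Finset.min'_le _ _ hwmem) (not_le.mpr hw)

lemma rank1_injective {S T : Finset (Fin n)} (h : rank1 S = rank1 T) : S = T := by
  by_contra hne
  obtain ⟨d, hcases, hagree⟩ := exists_min_diff hne
  rcases hcases with ⟨h1, h2⟩ | ⟨h1, h2⟩
  · exact absurd h (ne_of_lt (rank1_lt_of_lex h1 h2 hagree))
  · exact absurd h.symm (ne_of_lt (rank1_lt_of_lex h1 h2 (fun w hw => (hagree w hw).symm)))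

/-! Finset lemmas about `Fin.succ` images -/

noncomputable def preim (S : Finset (Fin (n+1))) : Finset (Fin n) :=
  S.preimage Fin.succ (Fin.succ_injective n).injOn

lemma mem_preim {S : Finset (Fin (n+1))} {a : Fin n} : a ∈ preim S ↔ a.succ ∈ S :=
  Finset.mem_preimage

lemma mem_image_succ {A : Finset (Fin n)} {a : Fin n} :
    a.succ ∈ A.image Fin.succ ↔ a ∈ A := by
  constructor
  · intro h
    rcases Finset.mem_image.mp h with ⟨b, hb, hba⟩
    rwa [← Fin.succ_injective n hba]
  · exact Finset.mem_image_of_mem _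

lemma zero_not_mem_image_succ {A : Finset (Fin n)} : (0 : Fin (n+1)) ∉ A.image Fin.succ := by
  intro h
  rcases Finset.mem_image.mp h with ⟨b, _, hb⟩
  exact Fin.succ_ne_zero b hb

lemma preim_image (A : Finset (Fin n)) : preim (A.image Fin.succ) = A := by
  ext a
  rw [mem_preim, mem_image_succ]

lemma preim_insert0 (A : Finset (Fin n)) :
    preim (insert (0 : Fin (n+1)) (A.image Fin.succ)) = A := by
  ext a
  rw [mem_preim, Finset.mem_insert, mem_image_succ]
  simp [Fin.succ_ne_zero]

lemma reconstruct {S : Finset (Fin (n+1))} (h0 : 0 ∈ S) :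
    S = insert 0 ((preim S).image Fin.succ) := by
  ext x
  constructor
  · intro hx
    rcases Fin.eq_zero_or_eq_succ x with rfl | ⟨y, rfl⟩
    · exact Finset.mem_insert_self _ _
    · exact Finset.mem_insert_of_mem (Finset.mem_image_of_mem _ (mem_preim.mpr hx))
  · intro hx
    rcases Finset.mem_insert.mp hx with rfl | hx
    · exact h0
    · rcases Finset.mem_image.mp hx with ⟨y, hy, rfl⟩
      exact mem_preim.mp hy

lemma reconstruct0 {S : Finset (Fin (n+1))} (h0 : (0 : Fin (n+1)) ∉ S) :
    S = (preim S).image Fin.succ := by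
  ext x
  constructor
  · intro hx
    rcases Fin.eq_zero_or_eq_succ x with rfl | ⟨y, rfl⟩
    · exact absurd hx h0
    · exact Finset.mem_image_of_mem _ (mem_preim.mpr hx)
  · intro hx
    rcases Finset.mem_image.mp hx with ⟨y, hy, rfl⟩
    exact mem_preim.mp hy

lemma card_image_succ (A : Finset (Fin n)) : (A.image Fin.succ).card = A.card :=
  Finset.card_image_of_injective _ (Fin.succ_injective n)

lemma card_insert0 (A : Finset (Fin n)) :
    (insert (0 : Fin (n+1)) (A.image Fin.succ)).card = A.card + 1 := by
  rw [Finset.card_insert_of_notMem zero_not_mem_image_succ, card_image_succ]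

lemma image_succ_sdiff (A B : Finset (Fin n)) :
    (A.image Fin.succ) \ (B.image Fin.succ) = (A \ B).image Fin.succ :=
  (Finset.image_sdiff _ _ (Fin.succ_injective n)).symm

lemma insert0_sdiff_insert0 (A B : Finset (Fin n)) :
    (insert (0 : Fin (n+1)) (A.image Fin.succ)) \ (insert 0 (B.image Fin.succ))
      = (A \ B).image Fin.succ := by
  rw [Finset.insert_sdiff_of_mem _ (Finset.mem_insert_self _ _)]
  rw [Finset.sdiff_insert_of_notMem zero_not_mem_image_succ]  -- maybe wrong name
  exact image_succ_sdiff A B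

lemma insert0_sdiff_image (A B : Finset (Fin n)) :
    (insert (0 : Fin (n+1)) (A.image Fin.succ)) \ (B.image Fin.succ)
      = insert 0 ((A \ B).image Fin.succ) := by
  rw [Finset.insert_sdiff_of_notMem _ zero_not_mem_image_succ, image_succ_sdiff]

end Comb

section Decomp
variable {n : ℕ} (Γ' : SimpleGraph (Fin n)) (i : Fin n)

lemma G_adj_succ {a b : Fin n} :
    (whiskerGraph Γ' i)ᶜ.Adj a.succ b.succ ↔ Γ'ᶜ.Adj a b := by
  rw [SimpleGraph.compl_adj, SimpleGraph.compl_adj]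
  constructor
  · rintro ⟨hne, hnadj⟩
    refine ⟨fun h => hne (h ▸ rfl), fun h => hnadj (Or.inl ⟨a, b, h, rfl, rfl⟩)⟩
  · rintro ⟨hne, hnadj⟩
    refine ⟨fun h => hne (Fin.succ_injective n h), ?_⟩
    rintro (⟨a', b', hab, ha, hb⟩ | ⟨h1, -⟩ | ⟨-, h2⟩)
    · rw [← Fin.succ_injective n ha, ← Fin.succ_injective n hb] at hab
      exact hnadj hab
    · exact Fin.succ_ne_zero a h1
    · exact Fin.succ_ne_zero b h2

lemma G_adj_zero {b : Fin n} :
    (whiskerGraph Γ' i)ᶜ.Adj 0 b.succ ↔ b ≠ i := by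
  rw [SimpleGraph.compl_adj]
  constructor
  · rintro ⟨-, hnadj⟩ rfl
    exact hnadj (Or.inr (Or.inl ⟨rfl, rfl⟩))
  · intro hbi
    refine ⟨fun h => Fin.succ_ne_zero b h.symm, ?_⟩
    rintro (⟨a', b', hab, ha, hb⟩ | ⟨-, h2⟩ | ⟨h1, -⟩)
    · exact Fin.succ_ne_zero a' ha.symm
    · exact hbi (Fin.succ_injective n h2)
    · exact Fin.succ_ne_zero i h1.symm

lemma mem_fam_succ_image {k : ℕ} (S' : Finset (Fin n)) :
    (S'.image Fin.succ) ∈ Fam ((whiskerGraph Γ' i)ᶜ) (k+2) ↔ S' ∈ Fam Γ'ᶜ (k+2) := by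
  constructor
  · rintro ⟨hcard, t, htS, ⟨s, hsS, hts⟩, hadj⟩
    rcases Finset.mem_image.mp htS with ⟨t', ht', rfl⟩
    rcases Finset.mem_image.mp hsS with ⟨s', hs', rfl⟩
    refine ⟨by rw [← card_image_succ S']; exact hcard, t', ht',
      ⟨s', hs', by rwa [Fin.succ_lt_succ_iff] at hts⟩, ?_⟩
    intro w hw htw
    have := hadj w.succ (mem_image_succ.mpr hw) (Fin.succ_lt_succ_iff.mpr htw)
    exact (G_adj_succ Γ' i).mp this
  · rintro ⟨hcard, t', ht', ⟨s', hs', hts⟩, hadj⟩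
    refine ⟨by rw [card_image_succ]; exact hcard, t'.succ, mem_image_succ.mpr ht',
      ⟨s'.succ, mem_image_succ.mpr hs', Fin.succ_lt_succ_iff.mpr hts⟩, ?_⟩
    intro w hw htw
    rcases Finset.mem_image.mp hw with ⟨w', hw', rfl⟩
    rw [Fin.succ_lt_succ_iff] at htw
    exact (G_adj_succ Γ' i).mpr (hadj w' hw' htw)

lemma mem_fam_insert0 {k : ℕ} (S' : Finset (Fin n)) :
    (insert 0 (S'.image Fin.succ)) ∈ Fam ((whiskerGraph Γ' i)ᶜ) (k+2) ↔
      (S'.card = k+1 ∧ (i ∉ S' ∨ S' ∈ Fam Γ'ᶜ (k+1))) := by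
  constructor
  · rintro ⟨hcard, t, htS, ⟨s, hsS, hts⟩, hadj⟩
    rw [card_insert0] at hcard
    have hcard' : S'.card = k + 1 := by omega
    refine ⟨hcard', ?_⟩
    rcases Fin.eq_zero_or_eq_succ t with rfl | ⟨t', rfl⟩
    · left
      intro hiS
      have := hadj i.succ (Finset.mem_insert_of_mem (mem_image_succ.mpr hiS)) (Fin.succ_pos i)
      exact ((G_adj_zero Γ' i).mp this) rfl
    · right
      have ht' : t' ∈ S' := by
        rcases Finset.mem_insert.mp htS with h | h
        · exact absurd h (Fin.succ_ne_zero t')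
        · exact mem_image_succ.mp h
      have hs0 : (0 : Fin (n+1)) < t'.succ := Fin.succ_pos t'
      rcases Fin.eq_zero_or_eq_succ s with rfl | ⟨s', rfl⟩
      · exact absurd hts (Fin.not_lt_zero _)
      · have hs' : s' ∈ S' := by
          rcases Finset.mem_insert.mp hsS with h | h
          · exact absurd h (Fin.succ_ne_zero s')
          · exact mem_image_succ.mp h
        refine ⟨hcard', t', ht', ⟨s', hs', by rwa [Fin.succ_lt_succ_iff] at hts⟩, ?_⟩
        intro w hw htw
        have := hadj w.succ (Finset.mem_insert_of_mem (mem_image_succ.mpr hw))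
          (Fin.succ_lt_succ_iff.mpr htw)
        exact (G_adj_succ Γ' i).mp this
  · rintro ⟨hcard, hcase⟩
    have hS'ne : S'.Nonempty := Finset.card_pos.mp (by omega)
    refine ⟨by rw [card_insert0]; omega, ?_⟩
    rcases hcase with hi | ⟨-, t', ht', ⟨s', hs', hts⟩, hadj⟩
    · refine ⟨0, Finset.mem_insert_self _ _,
        ⟨hS'ne.choose.succ, Finset.mem_insert_of_mem (mem_image_succ.mpr hS'ne.choose_spec),
          Fin.succ_pos _⟩, ?_⟩
      intro w hw h0w
      rcases Fin.eq_zero_or_eq_succ w with rfl | ⟨w', rfl⟩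
      · exact absurd h0w (lt_irrefl _)
      · have hw' : w' ∈ S' := by
          rcases Finset.mem_insert.mp hw with h | h
          · exact absurd h (Fin.succ_ne_zero w')
          · exact mem_image_succ.mp h
        exact (G_adj_zero Γ' i).mpr (fun h => hi (h ▸ hw'))
    · refine ⟨t'.succ, Finset.mem_insert_of_mem (mem_image_succ.mpr ht'),
        ⟨s'.succ, Finset.mem_insert_of_mem (mem_image_succ.mpr hs'),
          Fin.succ_lt_succ_iff.mpr hts⟩, ?_⟩
      intro w hw htw
      rcases Fin.eq_zero_or_eq_succ w with rfl | ⟨w', rfl⟩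
      · exact absurd (htw.trans (Fin.succ_pos t')) (lt_irrefl _)
      · have hw' : w' ∈ S' := by
          rcases Finset.mem_insert.mp hw with h | h
          · exact absurd h (Fin.succ_ne_zero w')
          · exact mem_image_succ.mp h
        rw [Fin.succ_lt_succ_iff] at htw
        exact (G_adj_succ Γ' i).mpr (hadj w' hw' htw)

end Decomp

theorem rankLQ_whisker {n : ℕ} (Γ' : SimpleGraph (Fin n)) (i : Fin n) (k : ℕ)
    (hB : RankLQ' (Fam Γ'ᶜ (k+1))) (hC : RankLQ' (Fam Γ'ᶜ (k+2))) :
    RankLQ' (Fam ((whiskerGraph Γ' i)ᶜ) (k+2)) := by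
  classical
  obtain ⟨rB, hBinj, hBlq⟩ := hB
  obtain ⟨rC, hCinj, hClq⟩ := hC
  set MB : ℕ := ((Set.toFinite (Fam Γ'ᶜ (k+1))).toFinset.sup rB) + 1 with hMB
  have hMBlt : ∀ S' ∈ Fam Γ'ᶜ (k+1), rB S' < MB := by
    intro S' hS'
    have := Finset.le_sup (s := (Set.toFinite (Fam Γ'ᶜ (k+1))).toFinset) (f := rB)
      ((Set.Finite.mem_toFinset (Set.toFinite (Fam Γ'ᶜ (k+1)))).mpr hS')
    omega
  set G := (whiskerGraph Γ' i)ᶜ with hG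
  set r : Finset (Fin (n+1)) → ℕ := fun S =>
    if (0 : Fin (n+1)) ∈ S then
      (if i.succ ∈ S then 2^n + rB (preim S) else rank1 (preim S))
    else 2^n + MB + rC (preim S) with hr
  have hrS1 : ∀ S : Finset (Fin (n+1)), 0 ∈ S → i.succ ∉ S → r S = rank1 (preim S) := by
    intro S h0 hi
    rw [hr]
    simp only [if_pos h0, if_neg hi]
  have hrS2 : ∀ S : Finset (Fin (n+1)), 0 ∈ S → i.succ ∈ S → r S = 2^n + rB (preim S) := by
    intro S h0 hi
    rw [hr]
    simp only [if_pos h0, if_pos hi]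
  have hrS3 : ∀ S : Finset (Fin (n+1)), 0 ∉ S → r S = 2^n + MB + rC (preim S) := by
    intro S h0
    rw [hr]
    simp only [if_neg h0]
  have hmem : ∀ S ∈ Fam G (k+2),
      (0 ∈ S → ((preim S).card = k+1 ∧ (i ∉ preim S ∨ preim S ∈ Fam Γ'ᶜ (k+1)))) ∧
      (0 ∉ S → preim S ∈ Fam Γ'ᶜ (k+2)) := by
    intro S hS
    constructor
    · intro h0
      have h1 := hS
      rw [hG] at h1
      rw [reconstruct h0] at h1
      exact (mem_fam_insert0 Γ' i (preim S)).mp h1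
    · intro h0
      have h1 := hS
      rw [hG] at h1
      rw [reconstruct0 h0] at h1
      exact (mem_fam_succ_image Γ' i (preim S)).mp h1
  have halt : ∀ S ∈ Fam G (k+2), 0 ∈ S → i.succ ∈ S → preim S ∈ Fam Γ'ᶜ (k+1) := by
    intro S hS h0 hi
    rcases ((hmem S hS).1 h0).2 with h | h
    · exact absurd (mem_preim.mpr hi) h
    · exact h
  have hmk1 : ∀ A : Finset (Fin n), A.card = k+1 → i ∉ A →
      insert 0 (A.image Fin.succ) ∈ Fam G (k+2) := by
    intro A hc hi
    rw [hG]
    exact (mem_fam_insert0 Γ' i A).mpr ⟨hc, Or.inl hi⟩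
  have hmk2 : ∀ A, A ∈ Fam Γ'ᶜ (k+1) → insert 0 (A.image Fin.succ) ∈ Fam G (k+2) := by
    intro A hA
    rw [hG]
    exact (mem_fam_insert0 Γ' i A).mpr ⟨hA.1, Or.inr hA⟩
  have hmk3 : ∀ A, A ∈ Fam Γ'ᶜ (k+2) → A.image Fin.succ ∈ Fam G (k+2) := by
    intro A hA
    rw [hG]
    exact (mem_fam_succ_image Γ' i A).mpr hA
  have hisucc_ins : ∀ A : Finset (Fin n),
      (Fin.succ i ∈ insert (0 : Fin (n+1)) (A.image Fin.succ)) ↔ i ∈ A := by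
    intro A
    rw [Finset.mem_insert, mem_image_succ]
    simp [Fin.succ_ne_zero]
  refine ⟨r, ?_, ?_⟩
  · -- injectivity on the family
    intro S hS T hT hrank
    by_cases h0S : 0 ∈ S <;> by_cases h0T : 0 ∈ T
    · by_cases hiS : i.succ ∈ S <;> by_cases hiT : i.succ ∈ T
      · rw [hrS2 S h0S hiS, hrS2 T h0T hiT] at hrank
        have heq := hBinj (halt S hS h0S hiS) (halt T hT h0T hiT) (by omega)
        rw [reconstruct h0S, reconstruct h0T, heq]
      · rw [hrS2 S h0S hiS, hrS1 T h0T hiT] at hrank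
        have := rank1_lt (preim T)
        omega
      · rw [hrS1 S h0S hiS, hrS2 T h0T hiT] at hrank
        have := rank1_lt (preim S)
        omega
      · rw [hrS1 S h0S hiS, hrS1 T h0T hiT] at hrank
        rw [reconstruct h0S, reconstruct h0T, rank1_injective hrank]
    · rw [hrS3 T h0T] at hrank
      by_cases hiS : i.succ ∈ S
      · rw [hrS2 S h0S hiS] at hrank
        have := hMBlt _ (halt S hS h0S hiS)
        omega
      · rw [hrS1 S h0S hiS] at hrank
        have := rank1_lt (preim S)
        omega
    · rw [hrS3 S h0S] at hrank
      by_cases hiT : i.succ ∈ T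
      · rw [hrS2 T h0T hiT] at hrank
        have := hMBlt _ (halt T hT h0T hiT)
        omega
      · rw [hrS1 T h0T hiT] at hrank
        have := rank1_lt (preim T)
        omega
    · rw [hrS3 S h0S, hrS3 T h0T] at hrank
      rw [reconstruct0 h0S, reconstruct0 h0T,
        hCinj ((hmem S hS).2 h0S) ((hmem T hT).2 h0T) (by omega)]
  · -- linear quotient condition
    intro S hS T hT hrlt
    by_cases h0S : 0 ∈ S
    · by_cases hiS : i.succ ∈ S
      · -- S of type c2
        rw [hrS2 S h0S hiS] at hrlt
        have hSm : preim S ∈ Fam Γ'ᶜ (k+1) := halt S hS h0S hiS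
        by_cases h0T : 0 ∈ T
        · by_cases hiT : i.succ ∈ T
          · -- c2 / c2 : use hBlq
            rw [hrS2 T h0T hiT] at hrlt
            have hTm : preim T ∈ Fam Γ'ᶜ (k+1) := halt T hT h0T hiT
            obtain ⟨v', hv', L', hL', hrL', hLd'⟩ := hBlq _ hSm _ hTm (by omega)
            refine ⟨v'.succ, ?_, insert 0 (L'.image Fin.succ), hmk2 L' hL', ?_, ?_⟩
            · rw [Finset.mem_sdiff]
              constructor
              · rw [reconstruct h0T]
                exact Finset.mem_insert_of_mem
                  (mem_image_succ.mpr (Finset.mem_sdiff.mp hv').1)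
              · intro h
                exact (Finset.mem_sdiff.mp hv').2 (mem_preim.mpr h)
            · rw [hrS2 S h0S hiS]
              by_cases hiL : i ∈ L'
              · rw [hrS2 _ (Finset.mem_insert_self _ _) ((hisucc_ins L').mpr hiL),
                  preim_insert0]
                omega
              · rw [hrS1 _ (Finset.mem_insert_self _ _)
                  (fun h => hiL ((hisucc_ins L').mp h)), preim_insert0]
                have := rank1_lt L'
                omega
            · rw [reconstruct h0S, insert0_sdiff_insert0]
              rw [hLd', Finset.image_singleton]
          · -- c2 / c1 : remove i, add an element of T' \ S'
            have hiS' : i ∈ preim S := mem_preim.mpr hiS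
            have hiT' : i ∉ preim T := fun h => hiT (mem_preim.mp h)
            have hScard : (preim S).card = k+1 := ((hmem S hS).1 h0S).1
            have hTcard : (preim T).card = k+1 := ((hmem T hT).1 h0T).1
            have hne : (preim T \ preim S).Nonempty := by
              rw [Finset.sdiff_nonempty]
              intro hsub
              have : preim T = preim S :=
                Finset.eq_of_subset_of_card_le hsub (by omega)
              exact hiT' (this ▸ hiS')
            obtain ⟨v', hv'⟩ := hne
            have hv'T : v' ∈ preim T := (Finset.mem_sdiff.mp hv').1
            have hv'S : v' ∉ preim S := (Finset.mem_sdiff.mp hv').2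
            have hv'i : v' ≠ i := fun h => hiT' (h ▸ hv'T)
            have hv'er : v' ∉ (preim S).erase i := fun h => hv'S (Finset.mem_of_mem_erase h)
            have hLcard : (insert v' ((preim S).erase i)).card = k+1 := by
              rw [Finset.card_insert_of_notMem hv'er, Finset.card_erase_of_mem hiS']
              omega
            have hiL : i ∉ insert v' ((preim S).erase i) := by
              intro h
              rcases Finset.mem_insert.mp h with h | h
              · exact hv'i h.symm
              · exact Finset.notMem_erase i _ h
            refine ⟨v'.succ, ?_, insert 0 ((insert v' ((preim S).erase i)).image Fin.succ),
              hmk1 _ hLcard hiL, ?_, ?_⟩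
            · rw [Finset.mem_sdiff]
              constructor
              · rw [reconstruct h0T]
                exact Finset.mem_insert_of_mem (mem_image_succ.mpr hv'T)
              · intro h
                exact hv'S (mem_preim.mpr h)
            · rw [hrS2 S h0S hiS, hrS1 _ (Finset.mem_insert_self _ _)
                (fun h => hiL ((hisucc_ins _).mp h)), preim_insert0]
              have := rank1_lt (insert v' ((preim S).erase i))
              omega
            · rw [reconstruct h0S, insert0_sdiff_insert0]
              simp only [preim_insert0]
              have hd : insert v' ((preim S).erase i) \ preim S = {v'} := by
                apply Finset.Subset.antisymm
                · intro w hw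
                  rcases Finset.mem_sdiff.mp hw with ⟨hw1, hw2⟩
                  rcases Finset.mem_insert.mp hw1 with rfl | h
                  · exact Finset.mem_singleton_self _
                  · exact absurd (Finset.mem_of_mem_erase h) hw2
                · intro w hw
                  rw [Finset.mem_singleton] at hw
                  subst hw
                  exact Finset.mem_sdiff.mpr ⟨Finset.mem_insert_self _ _, hv'S⟩
              rw [hd, Finset.image_singleton]
        · -- c2 / c3 : impossible
          rw [hrS3 T h0T] at hrlt
          have := hMBlt _ hSm
          omega
      · -- S of type c1 : lex case
        rw [hrS1 S h0S hiS] at hrlt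
        have hrankS := rank1_lt (preim S)
        by_cases h0T : 0 ∈ T
        · by_cases hiT : i.succ ∈ T
          · rw [hrS2 T h0T hiT] at hrlt
            omega
          · -- c1 / c1 : lexicographic argument
            rw [hrS1 T h0T hiT] at hrlt
            have hiS' : i ∉ preim S := fun h => hiS (mem_preim.mp h)
            have hiT' : i ∉ preim T := fun h => hiT (mem_preim.mp h)
            have hScard : (preim S).card = k+1 := ((hmem S hS).1 h0S).1
            have hTcard : (preim T).card = k+1 := ((hmem T hT).1 h0T).1
            have hST' : preim S ≠ preim T := by
              intro h
              rw [h] at hrlt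
              exact lt_irrefl _ hrlt
            obtain ⟨d, hcases, hagree⟩ := exists_min_diff hST'
            have hd : d ∈ preim T ∧ d ∉ preim S := by
              rcases hcases with ⟨h1, h2⟩ | h
              · exact absurd (rank1_lt_of_lex h1 h2 hagree) (by omega)
              · exact h
            have hS'ne : (preim S).Nonempty := Finset.card_pos.mp (by omega)
            set m0 := (preim S).max' hS'ne with hm0def
            have hm'S : m0 ∈ preim S := (preim S).max'_mem hS'ne
            have hdm' : d < m0 := by
              rcases lt_trichotomy d m0 with h | h | h
              · exact h
              · exact absurd (h ▸ hm'S) hd.2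
              · exfalso
                have hsub : preim S ⊆ preim T := fun w hw =>
                  (hagree w (lt_of_le_of_lt (hm0def ▸ (preim S).le_max' w hw) h)).mp hw
                have hssub : preim S ⊂ preim T :=
                  (Finset.ssubset_iff_of_subset hsub).mpr ⟨d, hd.1, hd.2⟩
                have := Finset.card_lt_card hssub
                omega
            set L' := insert d ((preim S).erase m0) with hL'def
            have hdnotin : d ∉ (preim S).erase m0 :=
              fun h => hd.2 (Finset.mem_of_mem_erase h)
            have hLcard : L'.card = k+1 := by
              rw [hL'def, Finset.card_insert_of_notMem hdnotin, Finset.card_erase_of_mem hm'S]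
              omega
            have hiL : i ∉ L' := by
              intro h
              rcases Finset.mem_insert.mp h with rfl | h
              · exact hiT' hd.1
              · exact hiS' (Finset.mem_of_mem_erase h)
            have hrank1L : rank1 L' < rank1 (preim S) := by
              rw [hL'def]
              apply rank1_lt_of_lex (Finset.mem_insert_self _ _) hd.2
              intro w hw
              have hwd : w ≠ d := ne_of_lt hw
              have hwm' : w ≠ m0 := ne_of_lt (hw.trans hdm')
              constructor
              · intro h
                rcases Finset.mem_insert.mp h with rfl | h
                · exact absurd rfl hwd
                · exact Finset.mem_of_mem_erase h
              · intro h
                exact Finset.mem_insert_of_mem (Finset.mem_erase.mpr ⟨hwm', h⟩)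
            refine ⟨d.succ, ?_, insert 0 (L'.image Fin.succ),
              hmk1 _ hLcard hiL, ?_, ?_⟩
            · rw [Finset.mem_sdiff]
              constructor
              · rw [reconstruct h0T]
                exact Finset.mem_insert_of_mem (mem_image_succ.mpr hd.1)
              · intro h
                exact hd.2 (mem_preim.mpr h)
            · rw [hrS1 S h0S hiS, hrS1 _ (Finset.mem_insert_self _ _)
                (fun h => hiL ((hisucc_ins _).mp h)), preim_insert0]
              exact hrank1L
            · rw [reconstruct h0S, insert0_sdiff_insert0]
              have hdd : L' \ preim S = {d} := by
                apply Finset.Subset.antisymm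
                · intro w hw
                  rcases Finset.mem_sdiff.mp hw with ⟨hw1, hw2⟩
                  rcases Finset.mem_insert.mp (hL'def ▸ hw1) with rfl | h
                  · exact Finset.mem_singleton_self _
                  · exact absurd (Finset.mem_of_mem_erase h) hw2
                · intro w hw
                  rw [Finset.mem_singleton] at hw
                  subst hw
                  rw [hL'def]
                  exact Finset.mem_sdiff.mpr ⟨Finset.mem_insert_self _ _, hd.2⟩
              rw [hdd, Finset.image_singleton]
        · -- c1 / c3 : impossible
          rw [hrS3 T h0T] at hrlt
          omega
    · -- S of type c3
      rw [hrS3 S h0S] at hrlt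
      have hSm : preim S ∈ Fam Γ'ᶜ (k+2) := (hmem S hS).2 h0S
      by_cases h0T : 0 ∈ T
      · -- witness 0
        have hScard : (preim S).card = k+2 := hSm.1
        have hS'ne : (preim S).Nonempty := Finset.card_pos.mp (by omega)
        set w0 := (if i ∈ preim S then i else (preim S).max' hS'ne) with hw0def
        have hw0S : w0 ∈ preim S := by
          rw [hw0def]
          split_ifs with h
          · exact h
          · exact (preim S).max'_mem hS'ne
        set L' := (preim S).erase w0 with hL'def
        have hLcard : L'.card = k+1 := by
          rw [hL'def, Finset.card_erase_of_mem hw0S]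
          omega
        have hiL : i ∉ L' := by
          intro h
          rw [hL'def] at h
          by_cases hi : i ∈ preim S
          · rw [hw0def, if_pos hi] at h
            exact Finset.notMem_erase i _ h
          · exact hi (Finset.mem_of_mem_erase h)
        refine ⟨0, Finset.mem_sdiff.mpr ⟨h0T, h0S⟩,
          insert 0 (L'.image Fin.succ), hmk1 _ hLcard hiL, ?_, ?_⟩
        · rw [hrS3 S h0S, hrS1 _ (Finset.mem_insert_self _ _)
            (fun h => hiL ((hisucc_ins _).mp h)), preim_insert0]
          have := rank1_lt L'
          omega
        · rw [reconstruct0 h0S, insert0_sdiff_image]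
          rw [Finset.sdiff_eq_empty_iff_subset.mpr (hL'def ▸ Finset.erase_subset _ _)]
          simp
      · -- c3 / c3 : use hClq
        rw [hrS3 T h0T] at hrlt
        have hTm : preim T ∈ Fam Γ'ᶜ (k+2) := (hmem T hT).2 h0T
        obtain ⟨v', hv', L', hL', hrL', hLd'⟩ := hClq _ hSm _ hTm (by omega)
        refine ⟨v'.succ, ?_, L'.image Fin.succ, hmk3 L' hL', ?_, ?_⟩
        · rw [Finset.mem_sdiff]
          constructor
          · rw [reconstruct0 h0T]
            exact mem_image_succ.mpr (Finset.mem_sdiff.mp hv').1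
          · intro h
            exact (Finset.mem_sdiff.mp hv').2 (mem_preim.mpr h)
        · rw [hrS3 S h0S, hrS3 _ zero_not_mem_image_succ, preim_image]
          omega
        · rw [reconstruct0 h0S, image_succ_sdiff, hLd', Finset.image_singleton]

lemma hsgens_eq (K : Type*) [Field K] {N : ℕ} (H : SimpleGraph (Fin N)) (k : ℕ) :
    HSgens K H k = (fun S => ∏ v ∈ S, X v) '' Fam H (k+2) := by
  classical
  ext w
  constructor
  · rintro ⟨A, B, hA, hB, hAB, hcard, ⟨a0, ha0A, ha0max, ha0adj⟩, rfl⟩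
    have hdisj : Disjoint A B := Finset.disjoint_left.mpr
      (fun {a} ha hb => absurd (hAB a ha a hb) (lt_irrefl a))
    refine ⟨A ∪ B, ⟨hcard, a0, Finset.mem_union_left _ ha0A, ?_, ?_⟩, ?_⟩
    · obtain ⟨b, hb⟩ := hB
      exact ⟨b, Finset.mem_union_right _ hb, hAB a0 ha0A b hb⟩
    · intro s hs hlt
      rcases Finset.mem_union.mp hs with h | h
      · exact absurd (lt_of_le_of_lt (ha0max s h) hlt) (lt_irrefl _)
      · exact ha0adj s h
    · exact Finset.prod_union hdisj
  · rintro ⟨S, ⟨hcard, t, htS, ⟨s0, hs0, hts0⟩, hadj⟩, rfl⟩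
    have hun : S.filter (· ≤ t) ∪ S.filter (t < ·) = S := by
      ext x
      simp only [Finset.mem_union, Finset.mem_filter]
      constructor
      · rintro (⟨h, -⟩ | ⟨h, -⟩) <;> exact h
      · intro h
        rcases le_or_gt x t with hh | hh
        · exact Or.inl ⟨h, hh⟩
        · exact Or.inr ⟨h, hh⟩
    have hdisj : Disjoint (S.filter (· ≤ t)) (S.filter (t < ·)) := by
      rw [Finset.disjoint_left]
      intro a ha hb
      exact absurd ((Finset.mem_filter.mp ha).2) (not_le.mpr (Finset.mem_filter.mp hb).2)
    refine ⟨S.filter (· ≤ t), S.filter (t < ·),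
      ⟨t, Finset.mem_filter.mpr ⟨htS, le_refl t⟩⟩,
      ⟨s0, Finset.mem_filter.mpr ⟨hs0, hts0⟩⟩, ?_, ?_,
      ⟨t, Finset.mem_filter.mpr ⟨htS, le_refl t⟩, ?_, ?_⟩, ?_⟩
    · intro a ha b hb
      exact lt_of_le_of_lt (Finset.mem_filter.mp ha).2 (Finset.mem_filter.mp hb).2
    · rw [hun]
      exact hcard
    · intro a ha
      exact (Finset.mem_filter.mp ha).2
    · intro b hb
      exact hadj b (Finset.mem_filter.mp hb).1 (Finset.mem_filter.mp hb).2
    · rw [← Finset.prod_union hdisj, hun]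

/-- **Proposition 3.2 (Ficarra–Herzog).**  Let `Γ'` be a chordal graph on the vertex set
`{2,…,n}` (encoded as `Fin n`) whose natural order is a perfect elimination order, and
suppose that all homological shift ideals `HS_k(I((Γ')ᶜ))` have linear quotients.  Let
`Γ` be the whisker graph obtained from `Γ'` by adding the new vertex `1` (encoded as `0`)
and the whisker `{1, i}`, and set `G = Γᶜ`.  Then the natural order is a perfect
elimination order of `Γ = Gᶜ`, and every `HS_k(I(G))` has linear quotients. -/
theorem HS_k_linearQuotients_of_whisker
    {K : Type*} [Field K] {n : ℕ} (Γ' : SimpleGraph (Fin n)) (i : Fin n)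
    (hchordal : IsChordal Γ')
    (hPEO : natPEO Γ')
    (hHS : ∀ k : ℕ, HasLinearQuotients (Ideal.span (HSgens K Γ'ᶜ k))) :
    natPEO (whiskerGraph Γ' i) ∧
    ∀ k : ℕ, HasLinearQuotients (Ideal.span (HSgens K (whiskerGraph Γ' i)ᶜ k)) := by
  constructor
  · -- the natural order is a perfect elimination order of the whisker graph
    intro u v w huv huw hvw hadj1 hadj2
    rcases hadj1 with ⟨a, b, hab, hua, hvb⟩ | ⟨hu0, hvi⟩ | ⟨hui, hv0⟩
    · rcases hadj2 with ⟨a', c, hac, hua', hwc⟩ | ⟨hu0, hwi⟩ | ⟨hui, hw0⟩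
      · subst hua
        subst hvb
        subst hwc
        have haa : a = a' := Fin.succ_injective n hua'
        rw [← haa] at hac
        left
        exact ⟨b, c, hPEO a b c (Fin.succ_lt_succ_iff.mp huv) (Fin.succ_lt_succ_iff.mp huw)
          (fun h => hvw (congrArg Fin.succ h)) hab hac, rfl, rfl⟩
      · exact absurd (hu0 ▸ hua) (fun h => Fin.succ_ne_zero a h.symm)
      · exfalso
        rw [hw0] at huw
        exact Fin.not_lt_zero u huw
    · rcases hadj2 with ⟨a', c, hac, hua', hwc⟩ | ⟨_, hwi⟩ | ⟨hui, hw0⟩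
      · exact absurd (hu0 ▸ hua') (fun h => Fin.succ_ne_zero a' h.symm)
      · exact absurd (hvi.trans hwi.symm) hvw
      · exact absurd (hui.symm.trans hu0) (Fin.succ_ne_zero i)
    · exfalso
      rw [hv0] at huv
      exact Fin.not_lt_zero u huv
  · -- all homological shift ideals have linear quotients
    intro k
    rw [hsgens_eq]
    apply hlq_of_rankLQ (d := k+2) fam_card
    apply rankLQ_whisker Γ' i k
    · cases k with
      | zero =>
        rw [fam_one_empty]
        exact rankLQ_empty
      | succ j =>
        have hj := hHS j
        rw [hsgens_eq] at hj
        exact rankLQ_of_hlq fam_card hj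
    · have hk := hHS k
      rw [hsgens_eq] at hk
      exact rankLQ_of_hlq fam_card hk
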